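/- Let n ≥ 4 be an even integer. Then the DCT-IV matrix satisfies the factorization C^IV_n = P_n^T · U_n · blkdiag(C^II_{n/2}, C^II_{n/2}) · R_n, where blkdiag(A,B) denotes the block-diagonal matrix with diagonal blocks A and B. -/
import Mathlib
set_option maxHeartbeats 1000000


open Matrix Real

/-- `ε_n(j)`: `1/√2` if `j = 0` or `j = n`, else `1`. -/
noncomputable def eps (n j : ℕ) : ℝ := if j = 0 ∨ j = n then 1 / Real.sqrt 2 else 1

/-- DCT-I matrix of size `(n+1) × (n+1)`. -/
noncomputable def C1 (n : ℕ) : Matrix (Fin (n + 1)) (Fin (n + 1)) ℝ := fun j k =>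
  Real.sqrt (2 / n) * eps n j.val * eps n k.val *
    Real.cos (((j.val * k.val : ℕ) : ℝ) * Real.pi / n)

/-- DCT-II matrix of size `n × n`. -/
noncomputable def C2 (n : ℕ) : Matrix (Fin n) (Fin n) ℝ := fun j k =>
  Real.sqrt (2 / n) * eps n j.val *
    Real.cos (((j.val * (2 * k.val + 1) : ℕ) : ℝ) * Real.pi / (2 * n))

/-- DCT-III matrix: transpose of DCT-II. -/
noncomputable def C3 (n : ℕ) : Matrix (Fin n) (Fin n) ℝ := (C2 n)ᵀ

/-- DCT-IV matrix of size `n × n`. -/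
noncomputable def C4 (n : ℕ) : Matrix (Fin n) (Fin n) ℝ := fun j k =>
  Real.sqrt (2 / n) *
    Real.cos ((((2 * j.val + 1) * (2 * k.val + 1) : ℕ) : ℝ) * Real.pi / (4 * n))

/-- Block-diagonal matrix with diagonal blocks `A` (size `p`) and `B` (size `q`),
viewed as a matrix of size `n` (intended for `n = p + q`). -/
noncomputable def blkdiag {n p q : ℕ} (A : Matrix (Fin p) (Fin p) ℝ)
    (B : Matrix (Fin q) (Fin q) ℝ) : Matrix (Fin n) (Fin n) ℝ := fun i j =>
  if hi : i.val < p then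
    if hj : j.val < p then A ⟨i.val, hi⟩ ⟨j.val, hj⟩ else 0
  else
    if j.val < p then 0
    else
      if hi' : i.val - p < q then
        if hj' : j.val - p < q then B ⟨i.val - p, hi'⟩ ⟨j.val - p, hj'⟩ else 0
      else 0

/-- `2×2` block matrix `[[A, B], [C, D]]` with square blocks of size `p`,
viewed as a matrix of size `n` (intended for `n = p + p`). -/
noncomputable def blk4 {n p : ℕ} (A B C D : Matrix (Fin p) (Fin p) ℝ) :
    Matrix (Fin n) (Fin n) ℝ := fun i j =>
  if hi : i.val < p then
    if hj : j.val < p then A ⟨i.val, hi⟩ ⟨j.val, hj⟩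
    else if hj' : j.val - p < p then B ⟨i.val, hi⟩ ⟨j.val - p, hj'⟩ else 0
  else if hi' : i.val - p < p then
    if hj : j.val < p then C ⟨i.val - p, hi'⟩ ⟨j.val, hj⟩
    else if hj' : j.val - p < p then D ⟨i.val - p, hi'⟩ ⟨j.val - p, hj'⟩ else 0
  else 0

/-- Flip (anti-diagonal) matrix `Ĩ_m`. -/
noncomputable def flipMat (m : ℕ) : Matrix (Fin m) (Fin m) ℝ := fun i j =>
  if i.val + j.val + 1 = m then 1 else 0

/-- Diagonal sign matrix `D_m = diag((-1)^k)`. -/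
noncomputable def Dmat (m : ℕ) : Matrix (Fin m) (Fin m) ℝ :=
  Matrix.diagonal fun k => (-1 : ℝ) ^ (k.val)

/-- Even-odd permutation matrix `P_n` for even `n`:
`P_n x = (x_0, x_2, …, x_{n-2}, x_1, x_3, …, x_{n-1})`. -/
noncomputable def Pev (n : ℕ) : Matrix (Fin n) (Fin n) ℝ := fun i j =>
  if j.val = (if i.val < n / 2 then 2 * i.val else 2 * (i.val - n / 2) + 1) then 1 else 0

/-- Even-odd permutation matrix `P_{n+1}` of odd size `n+1` (for even `n`):
`P_{n+1} x = (x_0, x_2, …, x_n, x_1, x_3, …, x_{n-1})`. -/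
noncomputable def Podd (n : ℕ) : Matrix (Fin (n + 1)) (Fin (n + 1)) ℝ := fun i j =>
  if j.val = (if i.val ≤ n / 2 then 2 * i.val else 2 * (i.val - n / 2) - 1) then 1 else 0

/-- Butterfly matrix `H_n = (1/√2)[[I, Ĩ], [I, -Ĩ]]` with blocks of size `n/2`. -/
noncomputable def Hmat (n : ℕ) : Matrix (Fin n) (Fin n) ℝ :=
  (1 / Real.sqrt 2) •
    blk4 (1 : Matrix (Fin (n / 2)) (Fin (n / 2)) ℝ) (flipMat (n / 2)) 1 (-(flipMat (n / 2)))

/-- Butterfly matrix `Ĥ_{n+1} = (1/√2)[[I, 0, Ĩ], [0, √2, 0], [I, 0, -Ĩ]]`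
with corner blocks of size `n/2` and middle row/column indexed by `n/2`. -/
noncomputable def Hbrev (n : ℕ) : Matrix (Fin (n + 1)) (Fin (n + 1)) ℝ := fun i j =>
  (1 / Real.sqrt 2) *
    (if i.val < n / 2 then
      (if j.val < n / 2 then (if i.val = j.val then 1 else 0)
       else if j.val = n / 2 then 0
       else if i.val + (j.val - (n / 2 + 1)) + 1 = n / 2 then 1 else 0)
     else if i.val = n / 2 then (if j.val = n / 2 then Real.sqrt 2 else 0)
     else
      (if j.val < n / 2 then (if i.val - (n / 2 + 1) = j.val then 1 else 0)
       else if j.val = n / 2 then 0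
       else -(if (i.val - (n / 2 + 1)) + (j.val - (n / 2 + 1)) + 1 = n / 2 then 1 else 0)))

/-- The matrix `U_n`. -/
noncomputable def Umat (n : ℕ) : Matrix (Fin n) (Fin n) ℝ :=
  (blkdiag (n := n) (1 : Matrix (Fin 1) (Fin 1) ℝ)
    (blkdiag (n := n - 1)
      ((1 / Real.sqrt 2) • blk4 (n := n - 2)
        (1 : Matrix (Fin (n / 2 - 1)) (Fin (n / 2 - 1)) ℝ) 1 1 (-1))
      (-1 : Matrix (Fin 1) (Fin 1) ℝ))) *
  blkdiag (n := n) (1 : Matrix (Fin (n / 2)) (Fin (n / 2)) ℝ) (Dmat (n / 2) * flipMat (n / 2))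

/-- The rotation/rotation-reflection matrix `R_n`. -/
noncomputable def Rmat (n : ℕ) : Matrix (Fin n) (Fin n) ℝ :=
  blkdiag (n := n) (1 : Matrix (Fin (n / 2)) (Fin (n / 2)) ℝ) (Dmat (n / 2)) *
  blk4 (n := n)
    (Matrix.diagonal fun k : Fin (n / 2) =>
      Real.cos (((2 * k.val + 1 : ℕ) : ℝ) * Real.pi / (4 * n)))
    ((Matrix.diagonal fun k : Fin (n / 2) =>
      Real.sin (((2 * k.val + 1 : ℕ) : ℝ) * Real.pi / (4 * n))) * flipMat (n / 2))
    (-(flipMat (n / 2) * Matrix.diagonal fun k : Fin (n / 2) =>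
      Real.sin (((2 * k.val + 1 : ℕ) : ℝ) * Real.pi / (4 * n))))
    (Matrix.diagonal fun k : Fin (n / 2) =>
      Real.cos (((2 * (n / 2 - 1 - k.val) + 1 : ℕ) : ℝ) * Real.pi / (4 * n)))

lemma negpow (x y : ℕ) (h : x % 2 = y % 2) : (-1:ℝ)^x = (-1:ℝ)^y := by
  rw [← Nat.div_add_mod x 2, ← Nat.div_add_mod y 2, pow_add, pow_add, pow_mul, pow_mul]
  norm_num [h]

lemma cos_nat_pi (l : ℕ) : Real.cos (l * Real.pi) = (-1)^l := by
  have := Real.cos_nat_mul_pi_sub 0 l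
  simpa using this

lemma cos_odd_half (l : ℕ) : Real.cos ((2*(l:ℝ)+1) * (Real.pi/2)) = 0 := by
  have : (2*(l:ℝ)+1) * (Real.pi/2) = l * Real.pi + Real.pi/2 := by ring
  rw [this, Real.cos_add_pi_div_two, Real.sin_nat_mul_pi, neg_zero]

lemma sin_odd_half (l : ℕ) : Real.sin ((2*(l:ℝ)+1) * (Real.pi/2)) = (-1)^l := by
  have : (2*(l:ℝ)+1) * (Real.pi/2) = l * Real.pi + Real.pi/2 := by ring
  rw [this, Real.sin_add_pi_div_two, cos_nat_pi]

lemma sum_val_eq {N : ℕ} (x : ℕ) (hx : x < N) (g : Fin N → ℝ) :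
    ∑ b : Fin N, (if b.val = x then g b else 0) = g ⟨x, hx⟩ := by
  rw [Finset.sum_eq_single (⟨x, hx⟩ : Fin N)]
  · simp
  · intro b _ hb
    rw [if_neg]
    simpa [Fin.ext_iff] using hb
  · simp

lemma sum_val_eq2 {N : ℕ} (x y : ℕ) (hx : x < N) (hy : y < N) (hxy : x ≠ y)
    (g h : Fin N → ℝ) :
    ∑ b : Fin N, (if b.val = x then g b else if b.val = y then h b else 0)
      = g ⟨x, hx⟩ + h ⟨y, hy⟩ := by
  have : ∀ b : Fin N, (if b.val = x then g b else if b.val = y then h b else 0)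
      = (if b.val = x then g b else 0) + (if b.val = y then h b else 0) := by
    intro b
    by_cases h1 : b.val = x <;> by_cases h2 : b.val = y <;> simp_all
  simp only [this, Finset.sum_add_distrib, sum_val_eq x hx, sum_val_eq y hy]
lemma Pev_t (m : ℕ) (hm : 2 ≤ m) (j i : Fin (m+m)) :
    (Pev (m+m))ᵀ j i =
      if i.val = (if j.val % 2 = 0 then j.val / 2 else m + j.val / 2) then 1 else 0 := by
  have h2 : (m+m)/2 = m := by omega
  have hj := j.isLt
  have hi := i.isLt
  simp only [Matrix.transpose_apply, Pev, h2]
  by_cases hc : i.val < m <;> by_cases hp : j.val % 2 = 0 <;>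
    simp only [hc, hp, if_true, if_false] <;> split_ifs <;> first | rfl | omega

section evals
variable {n p q : ℕ}

lemma blkdiag_AA (A : Matrix (Fin p) (Fin p) ℝ) (B : Matrix (Fin q) (Fin q) ℝ)
    (i j : Fin n) (hi : i.val < p) (hj : j.val < p) :
    blkdiag A B i j = A ⟨i.val, hi⟩ ⟨j.val, hj⟩ := by
  simp [blkdiag, hi, hj]

lemma blkdiag_AB (A : Matrix (Fin p) (Fin p) ℝ) (B : Matrix (Fin q) (Fin q) ℝ)
    (i j : Fin n) (hi : i.val < p) (hj : ¬ j.val < p) :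
    blkdiag A B i j = 0 := by
  simp [blkdiag, hi, hj]

lemma blkdiag_BA (A : Matrix (Fin p) (Fin p) ℝ) (B : Matrix (Fin q) (Fin q) ℝ)
    (i j : Fin n) (hi : ¬ i.val < p) (hj : j.val < p) :
    blkdiag A B i j = 0 := by
  simp [blkdiag, hi, hj]

lemma blkdiag_BB (A : Matrix (Fin p) (Fin p) ℝ) (B : Matrix (Fin q) (Fin q) ℝ)
    (i j : Fin n) (hi : ¬ i.val < p) (hj : ¬ j.val < p)
    (hi' : i.val - p < q) (hj' : j.val - p < q) :
    blkdiag A B i j = B ⟨i.val - p, hi'⟩ ⟨j.val - p, hj'⟩ := by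
  simp [blkdiag, hi, hj, hi', hj']

lemma blk4_A (A B C D : Matrix (Fin p) (Fin p) ℝ) (i j : Fin n)
    (hi : i.val < p) (hj : j.val < p) :
    blk4 A B C D i j = A ⟨i.val, hi⟩ ⟨j.val, hj⟩ := by
  simp [blk4, hi, hj]

lemma blk4_B (A B C D : Matrix (Fin p) (Fin p) ℝ) (i j : Fin n)
    (hi : i.val < p) (hj : ¬ j.val < p) (hj' : j.val - p < p) :
    blk4 A B C D i j = B ⟨i.val, hi⟩ ⟨j.val - p, hj'⟩ := by
  simp [blk4, hi, hj, hj']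

lemma blk4_C (A B C D : Matrix (Fin p) (Fin p) ℝ) (i j : Fin n)
    (hi : ¬ i.val < p) (hi' : i.val - p < p) (hj : j.val < p) :
    blk4 A B C D i j = C ⟨i.val - p, hi'⟩ ⟨j.val, hj⟩ := by
  simp [blk4, hi, hi', hj]

lemma blk4_D (A B C D : Matrix (Fin p) (Fin p) ℝ) (i j : Fin n)
    (hi : ¬ i.val < p) (hi' : i.val - p < p) (hj : ¬ j.val < p) (hj' : j.val - p < p) :
    blk4 A B C D i j = D ⟨i.val - p, hi'⟩ ⟨j.val - p, hj'⟩ := by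
  simp [blk4, hi, hi', hj, hj']

end evals

lemma X_apply (m : ℕ) (hm : 2 ≤ m) (i c : Fin (m+m)) :
    (blkdiag (n := m+m) (1 : Matrix (Fin 1) (Fin 1) ℝ)
      (blkdiag (n := m+m-1)
        ((1 / Real.sqrt 2) • blk4 (n := m+m-2)
          (1 : Matrix (Fin ((m+m)/2 - 1)) (Fin ((m+m)/2 - 1)) ℝ) 1 1 (-1))
        (-1 : Matrix (Fin 1) (Fin 1) ℝ))) i c =
    if i.val = 0 then (if c.val = 0 then 1 else 0)
    else if i.val < m then
      (if c.val = i.val then 1 / Real.sqrt 2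
       else if c.val = i.val + m - 1 then 1 / Real.sqrt 2 else 0)
    else if i.val = 2*m-1 then (if c.val = 2*m-1 then -1 else 0)
    else
      (if c.val = i.val - m + 1 then 1 / Real.sqrt 2
       else if c.val = i.val then -(1 / Real.sqrt 2) else 0) := by
  have h2 : (m+m)/2 - 1 = m - 1 := by omega
  have hi := i.isLt
  have hc := c.isLt
  rw [h2]
  rcases (show i.val = 0 ∨ (1 ≤ i.val ∧ i.val < m) ∨ (m ≤ i.val ∧ i.val ≤ 2*m-2)
      ∨ i.val = 2*m-1 from by omega) with hI | hI | hI | hI <;>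
  rcases (show c.val = 0 ∨ (1 ≤ c.val ∧ c.val < m) ∨ (m ≤ c.val ∧ c.val ≤ 2*m-2)
      ∨ c.val = 2*m-1 from by omega) with hC | hC | hC | hC <;>
  simp (disch := first | omega | (simp only [Fin.val_mk]; omega)) only [blkdiag_AA, blkdiag_AB, blkdiag_BA,
    blkdiag_BB, blk4_A, blk4_B, blk4_C, blk4_D, Matrix.smul_apply, Matrix.neg_apply,
    Matrix.one_apply, smul_eq_mul, Fin.mk.injEq, Fin.val_mk] <;>
  split_ifs <;> first | rfl | omega | norm_num

lemma Y_apply (m : ℕ) (hm : 2 ≤ m) (c a : Fin (m+m)) :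
    (blkdiag (n := m+m) (1 : Matrix (Fin ((m+m)/2)) (Fin ((m+m)/2)) ℝ)
      (Dmat ((m+m)/2) * flipMat ((m+m)/2))) c a =
    if a.val < m then (if c.val = a.val then 1 else 0)
    else (if c.val = 3*m-1-a.val then (-1:ℝ)^(a.val+1) else 0) := by
  have h2 : (m+m)/2 = m := by omega
  have hc := c.isLt
  have ha := a.isLt
  rw [h2]
  rcases (show c.val < m ∨ m ≤ c.val from by omega) with hC | hC <;>
  rcases (show a.val < m ∨ m ≤ a.val from by omega) with hA | hA <;>
  simp (disch := first | omega | (simp only [Fin.val_mk]; omega)) only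
    [blkdiag_AA, blkdiag_AB, blkdiag_BA, blkdiag_BB, Matrix.diagonal_mul, Dmat, flipMat,
     Matrix.one_apply, Fin.mk.injEq, Fin.val_mk] <;>
  split_ifs <;> (try (first | rfl | omega | ring))
  all_goals linear_combination negpow (c.val - m) (a.val + 1) (by omega)

lemma Umat_apply (m : ℕ) (hm : 2 ≤ m) (i a : Fin (m+m)) :
    Umat (m+m) i a =
    if i.val = 0 then (if a.val = 0 then 1 else 0)
    else if i.val < m then
      (if a.val = i.val then 1 / Real.sqrt 2
       else if a.val = 2*m - i.val then (-1:ℝ)^(a.val+1) * (1 / Real.sqrt 2) else 0)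
    else if i.val = 2*m-1 then (if a.val = m then -(-1:ℝ)^(a.val+1) else 0)
    else
      (if a.val = i.val - m + 1 then 1 / Real.sqrt 2
       else if a.val = 3*m-1-i.val then -((-1:ℝ)^(a.val+1) * (1 / Real.sqrt 2)) else 0) := by
  have hi := i.isLt
  have ha := a.isLt
  rw [Umat, Matrix.mul_apply]
  by_cases hA : a.val < m
  · have hy : ∀ c : Fin (m+m),
        (blkdiag (n := m+m) (1 : Matrix (Fin ((m+m)/2)) (Fin ((m+m)/2)) ℝ)
          (Dmat ((m+m)/2) * flipMat ((m+m)/2))) c a = if c.val = a.val then 1 else 0 := by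
      intro c; rw [Y_apply m hm c a, if_pos hA]
    simp only [hy, mul_ite, mul_one, mul_zero]
    rw [sum_val_eq a.val (by omega), Fin.eta, X_apply m hm]
    split_ifs <;> first | rfl | omega | ring
  · have hy : ∀ c : Fin (m+m),
        (blkdiag (n := m+m) (1 : Matrix (Fin ((m+m)/2)) (Fin ((m+m)/2)) ℝ)
          (Dmat ((m+m)/2) * flipMat ((m+m)/2))) c a
          = if c.val = 3*m-1-a.val then (-1:ℝ)^(a.val+1) else 0 := by
      intro c; rw [Y_apply m hm c a, if_neg hA]
    simp only [hy, mul_ite, mul_zero]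
    rw [sum_val_eq (3*m-1-a.val) (by omega), X_apply m hm]
    simp only [Fin.val_mk]
    split_ifs <;> first | rfl | omega | ring

lemma Rmat_apply (m : ℕ) (hm : 2 ≤ m) (b k : Fin (m+m)) :
    Rmat (m+m) b k =
    if k.val < m then
      (if b.val = k.val then Real.cos (((2*b.val+1 : ℕ) : ℝ) * Real.pi / (4*(m+m)))
       else if b.val = 2*m-1-k.val then
         (-1:ℝ)^(b.val-m) * -Real.sin (((2*k.val+1 : ℕ) : ℝ) * Real.pi / (4*(m+m)))
       else 0)
    else
      (if b.val = 2*m-1-k.val then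
         Real.sin (((2*b.val+1 : ℕ) : ℝ) * Real.pi / (4*(m+m)))
       else if b.val = k.val then
         (-1:ℝ)^(b.val-m) *
           Real.cos (((2*(m-1-(b.val-m))+1 : ℕ) : ℝ) * Real.pi / (4*(m+m)))
       else 0) := by
  have hb := b.isLt
  have hk := k.isLt
  have h2 : (m+m)/2 = m := by omega
  rw [Rmat, h2, Matrix.mul_apply]
  have hS : ∀ cc : Fin (m+m),
      (blkdiag (n := m+m) (1 : Matrix (Fin m) (Fin m) ℝ) (Dmat m)) b cc
        = if cc.val = b.val then (if b.val < m then (1:ℝ) else (-1)^(b.val-m)) else 0 := by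
    intro cc
    have hcc := cc.isLt
    rcases (show b.val < m ∨ m ≤ b.val from by omega) with hB | hB <;>
    rcases (show cc.val < m ∨ m ≤ cc.val from by omega) with hC | hC <;>
    simp (disch := first | omega | (simp only [Fin.val_mk]; omega)) only
      [blkdiag_AA, blkdiag_AB, blkdiag_BA, blkdiag_BB, Dmat, Matrix.diagonal_apply,
       Matrix.one_apply, Fin.mk.injEq, Fin.val_mk] <;>
    split_ifs <;> first | rfl | omega
  simp only [hS, ite_mul, zero_mul]
  rw [sum_val_eq b.val (by omega), Fin.eta]
  rcases (show b.val < m ∨ m ≤ b.val from by omega) with hB | hB <;>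
  rcases (show k.val < m ∨ m ≤ k.val from by omega) with hK | hK <;>
  simp (disch := first | omega | (simp only [Fin.val_mk]; omega)) only
    [blk4_A, blk4_B, blk4_C, blk4_D, Matrix.diagonal_mul, Matrix.mul_diagonal,
     Matrix.diagonal_apply, Matrix.neg_apply, flipMat, Fin.mk.injEq, Fin.val_mk] <;>
  split_ifs <;> (try (first | rfl | omega | ring)) <;> (push_cast; ring)

lemma BR_apply (m : ℕ) (hm : 2 ≤ m) (a k : Fin (m+m)) :
    (blkdiag (n := m+m) (C2 ((m+m)/2)) (C2 ((m+m)/2)) * Rmat (m+m)) a k =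
    if k.val < m then
      (if a.val < m then
        (Real.sqrt (2/(m:ℝ)) * eps m a.val *
          Real.cos (((a.val*(2*k.val+1) : ℕ) : ℝ) * Real.pi / (2*m))) *
          Real.cos (((2*k.val+1 : ℕ) : ℝ) * Real.pi / (4*(m+m)))
       else
        (Real.sqrt (2/(m:ℝ)) * eps m (a.val-m) *
          Real.cos ((((a.val-m)*(2*(m-1-k.val)+1) : ℕ) : ℝ) * Real.pi / (2*m))) *
          ((-1:ℝ)^(m-1-k.val) *
            -Real.sin (((2*k.val+1 : ℕ) : ℝ) * Real.pi / (4*(m+m)))))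
    else
      (if a.val < m then
        (Real.sqrt (2/(m:ℝ)) * eps m a.val *
          Real.cos (((a.val*(2*(2*m-1-k.val)+1) : ℕ) : ℝ) * Real.pi / (2*m))) *
          Real.sin (((2*(2*m-1-k.val)+1 : ℕ) : ℝ) * Real.pi / (4*(m+m)))
       else
        (Real.sqrt (2/(m:ℝ)) * eps m (a.val-m) *
          Real.cos ((((a.val-m)*(2*(k.val-m)+1) : ℕ) : ℝ) * Real.pi / (2*m))) *
          ((-1:ℝ)^(k.val-m) *
            Real.cos (((2*(m-1-(k.val-m))+1 : ℕ) : ℝ) * Real.pi / (4*(m+m))))) := by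
  have ha := a.isLt
  have hk := k.isLt
  have h2 : (m+m)/2 = m := by omega
  rw [h2, Matrix.mul_apply]
  by_cases hK : k.val < m
  · have hR : ∀ bb : Fin (m+m), Rmat (m+m) bb k =
        if bb.val = k.val then Real.cos (((2*bb.val+1 : ℕ) : ℝ) * Real.pi / (4*(m+m)))
        else if bb.val = 2*m-1-k.val then
          (-1:ℝ)^(bb.val-m) * -Real.sin (((2*k.val+1 : ℕ) : ℝ) * Real.pi / (4*(m+m)))
        else 0 := by
      intro bb; rw [Rmat_apply m hm bb k, if_pos hK]
    simp only [hR, mul_ite, mul_zero]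
    rw [sum_val_eq2 k.val (2*m-1-k.val) (by omega) (by omega) (by omega)]
    rw [if_pos hK]
    by_cases hA : a.val < m <;>
    simp (disch := first | omega | (simp only [Fin.val_mk]; omega)) only
      [blkdiag_AA, blkdiag_AB, blkdiag_BA, blkdiag_BB, C2, Fin.val_mk, hA, if_true, if_false]
    · ring
    · rw [show 2*m-1-k.val-m = m-1-k.val from by omega]; ring
  · have hR : ∀ bb : Fin (m+m), Rmat (m+m) bb k =
        if bb.val = 2*m-1-k.val then
          Real.sin (((2*bb.val+1 : ℕ) : ℝ) * Real.pi / (4*(m+m)))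
        else if bb.val = k.val then
          (-1:ℝ)^(bb.val-m) *
            Real.cos (((2*(m-1-(bb.val-m))+1 : ℕ) : ℝ) * Real.pi / (4*(m+m)))
        else 0 := by
      intro bb; rw [Rmat_apply m hm bb k, if_neg hK]
    simp only [hR, mul_ite, mul_zero]
    rw [sum_val_eq2 (2*m-1-k.val) k.val (by omega) (by omega) (by omega)]
    rw [if_neg hK]
    by_cases hA : a.val < m <;>
    simp (disch := first | omega | (simp only [Fin.val_mk]; omega)) only
      [blkdiag_AA, blkdiag_AB, blkdiag_BA, blkdiag_BB, C2, Fin.val_mk, hA, if_true, if_false]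
    · ring
    · ring

lemma keyA (l r : ℕ) (β : ℝ) :
    Real.cos ((2*(l:ℝ)+1)*(Real.pi/2) - r*Real.pi + β) = -((-1)^(l+r) * Real.sin β) := by
  rw [Real.cos_add, Real.cos_sub, Real.sin_sub, cos_odd_half, sin_odd_half, cos_nat_pi,
    Real.sin_nat_mul_pi, pow_add]
  ring

lemma keyB (l : ℕ) (β : ℝ) :
    Real.cos ((2*(l:ℝ)+1)*(Real.pi/2) - β) = (-1)^l * Real.sin β := by
  rw [Real.cos_sub, cos_odd_half, sin_odd_half]
  ring

lemma keyC (l : ℕ) (β : ℝ) :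
    Real.cos ((l:ℝ)*Real.pi + β) = (-1)^l * Real.cos β := by
  rw [Real.cos_add, cos_nat_pi, Real.sin_nat_mul_pi]
  ring

lemma sqrt2m (m : ℕ) (hm : 1 ≤ m) :
    Real.sqrt (2/((m:ℝ)+m)) = 1/Real.sqrt 2 * Real.sqrt (2/m) := by
  have h0 : (0:ℝ) < m := by exact_mod_cast hm
  rw [show (2:ℝ)/((m:ℝ)+m) = 2⁻¹ * (2/m) from by field_simp; ring,
    Real.sqrt_mul (by norm_num), Real.sqrt_inv, one_div]

lemma eps_one (m x : ℕ) (h1 : 1 ≤ x) (h2 : x ≤ m-1) (hm : 2 ≤ m) : eps m x = 1 := by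
  rw [eps, if_neg]; omega

lemma eps_zero (m : ℕ) : eps m 0 = 1/Real.sqrt 2 := by
  rw [eps, if_pos]; left; rfl

theorem dct4_factorization (n : ℕ) (hn : 4 ≤ n) (hev : Even n) :
    C4 n = (Pev n)ᵀ * Umat n * blkdiag (C2 (n / 2)) (C2 (n / 2)) * Rmat n := by
  obtain ⟨m, rfl⟩ := hev
  have hm : 2 ≤ m := by omega
  rw [Matrix.mul_assoc, Matrix.mul_assoc]
  ext j k
  have hj := j.isLt
  have hk := k.isLt
  rw [Matrix.mul_apply]
  simp only [Pev_t m hm j, ite_mul, one_mul, zero_mul]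
  have hcases : (j.val = 0) ∨ (∃ r, j.val = 2*r ∧ 1 ≤ r ∧ r ≤ m-1)
      ∨ (∃ r, j.val = 2*r+1 ∧ r ≤ m-2) ∨ j.val = 2*m-1 := by
    rcases Nat.even_or_odd j.val with ⟨r, hr⟩ | ⟨r, hr⟩
    · rcases Nat.eq_zero_or_pos r with h | h
      · left; omega
      · right; left; exact ⟨r, by omega, by omega, by omega⟩
    · by_cases hl : j.val = 2*m-1
      · right; right; right; exact hl
      · right; right; left; exact ⟨r, by omega, by omega⟩
  rcases hcases with h0 | ⟨r, hr, hr1, hr2⟩ | ⟨r, hr, hr2⟩ | hlast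
  · -- j = 0
    rw [show (if j.val % 2 = 0 then j.val/2 else m + j.val/2) = 0 from by split_ifs <;> omega]
    rw [sum_val_eq 0 (by omega), Matrix.mul_apply]
    have hrow : ∀ c : Fin (m+m), Umat (m+m) ⟨0, by omega⟩ c
        = if c.val = 0 then (1:ℝ) else 0 := by
      intro c
      rw [Umat_apply m hm _ c]
      simp only [Fin.val_mk, if_true]
    simp only [hrow, ite_mul, zero_mul, one_mul]
    rw [sum_val_eq 0 (by omega), BR_apply m hm ⟨0, by omega⟩ k]
    simp only [Fin.val_mk]
    by_cases hK : k.val < m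
    · rw [if_pos hK, if_pos (show (0:ℕ) < m from by omega)]
      simp only [C4, h0, eps_zero]
      push_cast
      rw [sqrt2m m (by omega)]
      norm_num
      exact Or.inl (by ring)
    · rw [if_neg hK, if_pos (show (0:ℕ) < m from by omega)]
      obtain ⟨u, hu⟩ : ∃ u, k.val = m + u := ⟨k.val - m, by omega⟩
      obtain ⟨v, hv⟩ : ∃ v, m = u + v + 1 := ⟨m - 1 - u, by omega⟩
      rw [show 2*m-1-k.val = v from by omega]
      simp only [C4, h0, eps_zero, hu]
      have hmuv : (m:ℝ) = u + v + 1 := by exact_mod_cast hv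
      have hm0 : (m:ℝ) ≠ 0 := by positivity
      push_cast
      simp only [one_mul, zero_mul, zero_div, Real.cos_zero]
      rw [show (2*((m:ℝ)+u)+1) * Real.pi / (4*((m:ℝ)+m))
          = Real.pi/2 - (2*(v:ℝ)+1) * Real.pi / (4*((m:ℝ)+m)) from by
        have huv0 : ((u:ℝ)+v+1) ≠ 0 := by positivity
        rw [hmuv]; field_simp; ring]
      rw [Real.cos_pi_div_two_sub, sqrt2m m (by omega)]
      ring
  · -- j = 2r
    rw [show (if j.val % 2 = 0 then j.val/2 else m + j.val/2) = r from by split_ifs <;> omega]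
    rw [sum_val_eq r (by omega), Matrix.mul_apply]
    have hrow : ∀ c : Fin (m+m), Umat (m+m) ⟨r, by omega⟩ c
        = if c.val = r then 1/Real.sqrt 2
          else if c.val = 2*m - r then (-1:ℝ)^(c.val+1) * (1/Real.sqrt 2) else 0 := by
      intro c
      rw [Umat_apply m hm _ c]
      simp only [Fin.val_mk]
      rw [if_neg (by omega : ¬ (r = 0)), if_pos (by omega : r < m)]
    simp only [hrow, ite_mul, zero_mul]
    rw [sum_val_eq2 r (2*m-r) (by omega) (by omega) (by omega)]
    rw [BR_apply m hm ⟨r, by omega⟩ k, BR_apply m hm ⟨2*m-r, by omega⟩ k]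
    simp only [Fin.val_mk]
    obtain ⟨s, hs⟩ : ∃ s, m = r + s := ⟨m - r, by omega⟩
    have c1 : r < m := by omega
    have c2 : ¬ (2*m - r < m) := by omega
    have hmrs : (m:ℝ) = r + s := by exact_mod_cast hs
    have hm0 : (m:ℝ) ≠ 0 := by positivity
    by_cases hK : k.val < m
    · simp only [hK, c1, c2, if_true, if_false]
      obtain ⟨t, ht⟩ : ∃ t, m = k.val + 1 + t := ⟨m - 1 - k.val, by omega⟩
      have hmkt : (m:ℝ) = (k.val:ℝ) + 1 + t := by exact_mod_cast ht
      have hkR : ((k.val:ℕ):ℝ) = (r:ℝ) + s - 1 - t := by linarith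
      rw [show m-1-k.val = t from by omega, show 2*m-r-m = s from by omega,
          negpow (2*m-r+1) (r+1) (by omega),
          eps_one m r (by omega) (by omega) hm, eps_one m s (by omega) (by omega) hm]
      simp only [C4, hr]
      push_cast
      rw [show (s:ℝ)*(2*(t:ℝ)+1)*Real.pi/(2*(m:ℝ))
          = (2*(t:ℝ)+1)*(Real.pi/2) - (r:ℝ)*Real.pi
            + (r:ℝ)*(2*((k.val:ℕ):ℝ)+1)*Real.pi/(2*(m:ℝ)) from by
        rw [hkR, hmrs]
        have hrs0 : ((r:ℝ)+s) ≠ 0 := by positivity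
        field_simp
        ring]
      rw [keyA t r]
      rw [show ((2*(2*(r:ℝ))+1)*(2*((k.val:ℕ):ℝ)+1))*Real.pi/(4*((m:ℝ)+(m:ℝ)))
          = (r:ℝ)*(2*((k.val:ℕ):ℝ)+1)*Real.pi/(2*(m:ℝ))
            + (2*((k.val:ℕ):ℝ)+1)*Real.pi/(4*((m:ℝ)+(m:ℝ))) from by
        field_simp
        ring]
      rw [Real.cos_add, sqrt2m m (by omega)]
      have hsign : (-1:ℝ)^(r+1) * (-1)^t * (-1)^(t+r) = -1 := by
        rw [← pow_add, ← pow_add, negpow _ 1 (by omega), pow_one]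
      linear_combination (-(1/Real.sqrt 2 * Real.sqrt (2/(m:ℝ))
        * Real.sin ((r:ℝ)*(2*((k.val:ℕ):ℝ)+1)*Real.pi/(2*(m:ℝ)))
        * Real.sin ((2*((k.val:ℕ):ℝ)+1)*Real.pi/(4*((m:ℝ)+(m:ℝ)))))) * hsign
    · simp only [hK, c1, c2, if_true, if_false]
      obtain ⟨u, hu⟩ : ∃ u, k.val = m + u := ⟨k.val - m, by omega⟩
      obtain ⟨v, hv⟩ : ∃ v, m = u + v + 1 := ⟨m - 1 - u, by omega⟩
      have hmuv : (m:ℝ) = (u:ℝ) + v + 1 := by exact_mod_cast hv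
      have hsR : (s:ℝ) = (m:ℝ) - r := by linarith
      have hvR : (v:ℝ) = (m:ℝ) - 1 - u := by linarith
      rw [show 2*m-1-k.val = v from by omega, show k.val-m = u from by omega,
          show m-1-u = v from by omega, show 2*m-r-m = s from by omega,
          negpow (2*m-r+1) (r+1) (by omega),
          eps_one m r (by omega) (by omega) hm, eps_one m s (by omega) (by omega) hm]
      simp only [C4, hr, hu]
      push_cast
      rw [show (s:ℝ)*(2*(u:ℝ)+1)*Real.pi/(2*(m:ℝ))
          = (2*(u:ℝ)+1)*(Real.pi/2) - (r:ℝ)*Real.pi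
            + (r:ℝ)*(2*(v:ℝ)+1)*Real.pi/(2*(m:ℝ)) from by
        rw [hsR, hvR]; field_simp; ring]
      rw [keyA u r]
      rw [show ((2*(2*(r:ℝ))+1)*(2*((m:ℝ)+(u:ℝ))+1))*Real.pi/(4*((m:ℝ)+(m:ℝ)))
          = (r:ℝ)*(2*Real.pi)
            - (((r:ℝ)*(2*(v:ℝ)+1)*Real.pi/(2*(m:ℝ))
               + (2*(v:ℝ)+1)*Real.pi/(4*((m:ℝ)+(m:ℝ)))) - Real.pi/2) from by
        rw [hvR]; field_simp; ring]
      rw [Real.cos_nat_mul_two_pi_sub, Real.cos_sub_pi_div_two, Real.sin_add,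
          sqrt2m m (by omega)]
      have hsign : (-1:ℝ)^(r+1) * (-1)^(u+r) * (-1)^u = -1 := by
        rw [← pow_add, ← pow_add, negpow _ 1 (by omega), pow_one]
      linear_combination (1/Real.sqrt 2 * Real.sqrt (2/(m:ℝ))
        * Real.sin ((r:ℝ)*(2*(v:ℝ)+1)*Real.pi/(2*(m:ℝ)))
        * Real.cos ((2*(v:ℝ)+1)*Real.pi/(4*((m:ℝ)+(m:ℝ))))) * hsign
  · -- j = 2r+1, r ≤ m-2
    rw [show (if j.val % 2 = 0 then j.val/2 else m + j.val/2) = m + r from by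
      split_ifs <;> omega]
    rw [sum_val_eq (m+r) (by omega), Matrix.mul_apply]
    have hrow : ∀ c : Fin (m+m), Umat (m+m) ⟨m+r, by omega⟩ c
        = if c.val = r+1 then 1/Real.sqrt 2
          else if c.val = 2*m-1-r then -((-1:ℝ)^(c.val+1) * (1/Real.sqrt 2)) else 0 := by
      intro c
      rw [Umat_apply m hm _ c]
      simp only [Fin.val_mk]
      rw [if_neg (by omega : ¬ (m+r = 0)), if_neg (by omega : ¬ (m+r < m)),
          if_neg (by omega : ¬ (m+r = 2*m-1)),
          show m+r-m+1 = r+1 from by omega, show 3*m-1-(m+r) = 2*m-1-r from by omega]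
    simp only [hrow, ite_mul, zero_mul]
    rw [sum_val_eq2 (r+1) (2*m-1-r) (by omega) (by omega) (by omega)]
    rw [BR_apply m hm ⟨r+1, by omega⟩ k, BR_apply m hm ⟨2*m-1-r, by omega⟩ k]
    simp only [Fin.val_mk]
    obtain ⟨s, hs⟩ : ∃ s, m = (r+1) + s := ⟨m - 1 - r, by omega⟩
    have c1 : r+1 < m := by omega
    have c2 : ¬ (2*m-1-r < m) := by omega
    have hmrs : (m:ℝ) = (r:ℝ) + 1 + s := by exact_mod_cast hs
    have hm0 : (m:ℝ) ≠ 0 := by positivity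
    have hsR : (s:ℝ) = (m:ℝ) - r - 1 := by linarith
    by_cases hK : k.val < m
    · simp only [hK, c1, c2, if_true, if_false]
      obtain ⟨t, ht⟩ : ∃ t, m = k.val + 1 + t := ⟨m - 1 - k.val, by omega⟩
      have hmkt : (m:ℝ) = (k.val:ℝ) + 1 + t := by exact_mod_cast ht
      have hkR : ((k.val:ℕ):ℝ) = (m:ℝ) - 1 - t := by linarith
      rw [show m-1-k.val = t from by omega, show 2*m-1-r-m = s from by omega,
          negpow (2*m-1-r+1) r (by omega),
          eps_one m (r+1) (by omega) (by omega) hm, eps_one m s (by omega) (by omega) hm]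
      simp only [C4, hr]
      push_cast
      rw [show (s:ℝ)*(2*(t:ℝ)+1)*Real.pi/(2*(m:ℝ))
          = (2*(t:ℝ)+1)*(Real.pi/2) - ((r+1 : ℕ):ℝ)*Real.pi
            + ((r:ℝ)+1)*(2*((k.val:ℕ):ℝ)+1)*Real.pi/(2*(m:ℝ)) from by
        rw [hsR, hkR]; push_cast; field_simp; ring]
      rw [keyA t (r+1)]
      rw [show ((2*(2*(r:ℝ)+1)+1)*(2*((k.val:ℕ):ℝ)+1))*Real.pi/(4*((m:ℝ)+(m:ℝ)))
          = ((r:ℝ)+1)*(2*((k.val:ℕ):ℝ)+1)*Real.pi/(2*(m:ℝ))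
            - (2*((k.val:ℕ):ℝ)+1)*Real.pi/(4*((m:ℝ)+(m:ℝ))) from by
        field_simp; ring]
      rw [Real.cos_sub, sqrt2m m (by omega)]
      have hsign : (-1:ℝ)^r * (-1)^(t+(r+1)) * (-1)^t = -1 := by
        rw [← pow_add, ← pow_add, negpow _ 1 (by omega), pow_one]
      linear_combination (1/Real.sqrt 2 * Real.sqrt (2/(m:ℝ))
        * Real.sin (((r:ℝ)+1)*(2*((k.val:ℕ):ℝ)+1)*Real.pi/(2*(m:ℝ)))
        * Real.sin ((2*((k.val:ℕ):ℝ)+1)*Real.pi/(4*((m:ℝ)+(m:ℝ))))) * hsign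
    · simp only [hK, c1, c2, if_true, if_false]
      obtain ⟨u, hu⟩ : ∃ u, k.val = m + u := ⟨k.val - m, by omega⟩
      obtain ⟨v, hv⟩ : ∃ v, m = u + v + 1 := ⟨m - 1 - u, by omega⟩
      have hmuv : (m:ℝ) = (u:ℝ) + v + 1 := by exact_mod_cast hv
      have hvR : (v:ℝ) = (m:ℝ) - 1 - u := by linarith
      rw [show 2*m-1-k.val = v from by omega, show k.val-m = u from by omega,
          show m-1-u = v from by omega, show 2*m-1-r-m = s from by omega,
          negpow (2*m-1-r+1) r (by omega),
          eps_one m (r+1) (by omega) (by omega) hm, eps_one m s (by omega) (by omega) hm]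
      simp only [C4, hr, hu]
      push_cast
      rw [show (s:ℝ)*(2*(u:ℝ)+1)*Real.pi/(2*(m:ℝ))
          = (2*(u:ℝ)+1)*(Real.pi/2) - ((r+1 : ℕ):ℝ)*Real.pi
            + ((r:ℝ)+1)*(2*(v:ℝ)+1)*Real.pi/(2*(m:ℝ)) from by
        rw [hsR, hvR]; push_cast; field_simp; ring]
      rw [keyA u (r+1)]
      rw [show ((2*(2*(r:ℝ)+1)+1)*(2*((m:ℝ)+(u:ℝ))+1))*Real.pi/(4*((m:ℝ)+(m:ℝ)))
          = ((r+1 : ℕ):ℝ)*(2*Real.pi)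
            - ((((r:ℝ)+1)*(2*(v:ℝ)+1)*Real.pi/(2*(m:ℝ))
               - (2*(v:ℝ)+1)*Real.pi/(4*((m:ℝ)+(m:ℝ)))) + Real.pi/2) from by
        rw [hvR]; push_cast; field_simp; ring]
      rw [Real.cos_nat_mul_two_pi_sub, Real.cos_add_pi_div_two, Real.sin_sub,
          sqrt2m m (by omega)]
      have hsign : (-1:ℝ)^r * (-1)^(u+(r+1)) * (-1)^u = -1 := by
        rw [← pow_add, ← pow_add, negpow _ 1 (by omega), pow_one]
      linear_combination (-(1/Real.sqrt 2 * Real.sqrt (2/(m:ℝ))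
        * Real.sin (((r:ℝ)+1)*(2*(v:ℝ)+1)*Real.pi/(2*(m:ℝ)))
        * Real.cos ((2*(v:ℝ)+1)*Real.pi/(4*((m:ℝ)+(m:ℝ)))))) * hsign
  · -- j = 2m-1
    rw [show (if j.val % 2 = 0 then j.val/2 else m + j.val/2) = 2*m-1 from by
      split_ifs <;> omega]
    rw [sum_val_eq (2*m-1) (by omega), Matrix.mul_apply]
    have hrow : ∀ c : Fin (m+m), Umat (m+m) ⟨2*m-1, by omega⟩ c
        = if c.val = m then -(-1:ℝ)^(c.val+1) else 0 := by
      intro c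
      rw [Umat_apply m hm _ c]
      simp only [Fin.val_mk]
      rw [if_neg (by omega : ¬ (2*m-1 = 0)), if_neg (by omega : ¬ (2*m-1 < m))]
      simp only [if_true]
    simp only [hrow, ite_mul, zero_mul]
    rw [sum_val_eq m (by omega), BR_apply m hm ⟨m, by omega⟩ k]
    simp only [Fin.val_mk]
    have c2 : ¬ (m < m) := by omega
    have hm0 : (m:ℝ) ≠ 0 := by positivity
    by_cases hK : k.val < m
    · simp only [hK, c2, if_true, if_false]
      obtain ⟨t, ht⟩ : ∃ t, m = k.val + 1 + t := ⟨m - 1 - k.val, by omega⟩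
      rw [show m-1-k.val = t from by omega, show m-m = 0 from by omega]
      simp only [C4, hlast, eps_zero]
      push_cast
      simp only [zero_mul, zero_div, Real.cos_zero]
      rw [show ((2*m-1 : ℕ):ℝ) = 2*(m:ℝ)-1 from by
        rw [Nat.cast_sub (by omega : 1 ≤ 2*m)]; push_cast; ring]
      rw [show ((2*(2*(m:ℝ)-1)+1)*(2*((k.val:ℕ):ℝ)+1))*Real.pi/(4*((m:ℝ)+(m:ℝ)))
          = (2*((k.val:ℕ):ℝ)+1)*(Real.pi/2)
            - (2*((k.val:ℕ):ℝ)+1)*Real.pi/(4*((m:ℝ)+(m:ℝ))) from by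
        field_simp; ring]
      rw [keyB (k.val), sqrt2m m (by omega)]
      have hsign : (-1:ℝ)^(m+1) * (-1)^t = (-1:ℝ)^(k.val) := by
        rw [← pow_add]; exact negpow _ _ (by omega)
      linear_combination (-(1/Real.sqrt 2 * Real.sqrt (2/(m:ℝ))
        * Real.sin ((2*((k.val:ℕ):ℝ)+1)*Real.pi/(4*((m:ℝ)+(m:ℝ)))))) * hsign
    · simp only [hK, c2, if_true, if_false]
      obtain ⟨u, hu⟩ : ∃ u, k.val = m + u := ⟨k.val - m, by omega⟩
      obtain ⟨v, hv⟩ : ∃ v, m = u + v + 1 := ⟨m - 1 - u, by omega⟩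
      rw [show k.val-m = u from by omega, show m-1-u = v from by omega,
          show m-m = 0 from by omega]
      simp only [C4, hlast, eps_zero]
      push_cast
      simp only [zero_mul, zero_div, Real.cos_zero]
      rw [show ((2*m-1 : ℕ):ℝ) = 2*(m:ℝ)-1 from by
        rw [Nat.cast_sub (by omega : 1 ≤ 2*m)]; push_cast; ring]
      have hkR : ((k.val:ℕ):ℝ) = (m:ℝ) + u := by exact_mod_cast hu
      have hvR : (v:ℝ) = (m:ℝ) - 1 - u := by
        have : (m:ℝ) = (u:ℝ) + v + 1 := by exact_mod_cast hv
        linarith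
      rw [show ((2*(2*(m:ℝ)-1)+1)*(2*((k.val:ℕ):ℝ)+1))*Real.pi/(4*((m:ℝ)+(m:ℝ)))
          = ((k.val:ℕ):ℝ)*Real.pi
            + (2*(v:ℝ)+1)*Real.pi/(4*((m:ℝ)+(m:ℝ))) from by
        rw [hkR, hvR]; field_simp; ring]
      rw [keyC (k.val), sqrt2m m (by omega)]
      have hsign : (-1:ℝ)^(m+1) * (-1)^u = -(-1:ℝ)^(k.val) := by
        rw [← pow_add, negpow (m+1+u) (k.val+1) (by omega), pow_succ]; ring
      linear_combination (1/Real.sqrt 2 * Real.sqrt (2/(m:ℝ))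
        * Real.cos ((2*(v:ℝ)+1)*Real.pi/(4*((m:ℝ)+(m:ℝ))))) * hsign
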